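/- Let n ∈ ℕ, ω ∈ (0, (n+1)π), and let r ∈ 𝒰_n have a phase function g. If the phase error g(x) − ωx equioscillates between 2n+2 points in [−1,1], then r minimizes the approximation error: ‖r − exp(ω·)‖ = min_{u ∈ 𝒰_n} ‖u − exp(ω·)‖ < 2. -/

import Mathlib

open Polynomial

noncomputable section

/-- `p†(z) := conj(p)(−z)`: conjugate the coefficients of `p` and substitute `−z`. -/
def pdag (p : Polynomial ℂ) : Polynomial ℂ :=
  (p.map (starRingEnd ℂ)).comp (-Polynomial.X)

/-- `𝒰 n`: the unitary rational functions of degree `(n,n)`, i.e. rational functions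
of the form `p†/p` with `p` a nonzero complex polynomial of degree at most `n`. -/
def unitaryClass (n : ℕ) : Set (RatFunc ℂ) :=
  {r | ∃ p : Polynomial ℂ, p ≠ 0 ∧ p.natDegree ≤ n ∧ r = RatFunc.mk (pdag p) p}

/-- Evaluation of a rational function at the imaginary point `i·x`. -/
def ieval (r : RatFunc ℂ) (x : ℝ) : ℂ :=
  RatFunc.eval (RingHom.id ℂ) (Complex.I * (x : ℂ)) r

/-- The uniform approximation error `‖r − exp(ω·)‖ = sup_{x∈[−1,1]} |r(ix) − e^{iωx}|`. -/
def errNorm (ω : ℝ) (r : RatFunc ℂ) : ℝ :=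
  sSup ((fun x : ℝ => ‖ieval r x - Complex.exp (Complex.I * ω * x)‖) ''
    Set.Icc (-1 : ℝ) 1)

/-- The maximal phase error `max_{x∈[−1,1]} |g(x) − ωx|`. -/
def phaseErrSup (ω : ℝ) (g : ℝ → ℝ) : ℝ :=
  sSup ((fun x : ℝ => |g x - ω * x|) '' Set.Icc (-1 : ℝ) 1)

/-- `g` is a phase function for `r ∈ 𝒰 n`: for some `m ≤ n`, `θ ∈ ℝ` and poles
`s j = ξ j + i μ j` with `ξ j ≠ 0`, `r` has the product representation
`r(z) = (−1)^m e^{iθ} ∏ (z + conj s_j)/(z − s_j)` and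
`g(x) = θ + 2 Σ_j arctan((x − μ j)/ξ j)` with `r(ix) = e^{i g(x)}`. -/
def IsPhaseFun (n : ℕ) (r : RatFunc ℂ) (g : ℝ → ℝ) : Prop :=
  ∃ (m : ℕ) (θ : ℝ) (μ ξ : Fin m → ℝ), m ≤ n ∧ (∀ j, ξ j ≠ 0) ∧
    r = RatFunc.mk
      (Polynomial.C ((-1 : ℂ) ^ m * Complex.exp (θ * Complex.I)) *
        ∏ j, (Polynomial.X + Polynomial.C (starRingEnd ℂ ((ξ j : ℂ) + (μ j : ℂ) * Complex.I))))
      (∏ j, (Polynomial.X - Polynomial.C ((ξ j : ℂ) + (μ j : ℂ) * Complex.I))) ∧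
    (∀ x : ℝ, g x = θ + 2 * ∑ j, Real.arctan ((x - μ j) / ξ j)) ∧
    (∀ x : ℝ, ieval r x = Complex.exp (Complex.I * g x))

/-- The phase error of `g` equioscillates between `m` points in `[−1,1]`. -/
def EquiOsc (ω : ℝ) (g : ℝ → ℝ) (m : ℕ) : Prop :=
  ∃ (η : Fin m → ℝ) (ε : ℝ), StrictMono η ∧ (∀ j, η j ∈ Set.Icc (-1 : ℝ) 1) ∧
    (ε = 1 ∨ ε = -1) ∧
    ∀ j : Fin m, g (η j) - ω * η j = ε * (-1 : ℝ) ^ (j : ℕ) * phaseErrSup ω g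

end

/-! ### Auxiliary lemmas -/

section Aux

lemma pdag_mul (p q : ℂ[X]) : pdag (p * q) = pdag p * pdag q := by
  simp [pdag, Polynomial.map_mul, mul_comp]

lemma pdag_eval (p : ℂ[X]) (z : ℂ) :
    (pdag p).eval z = starRingEnd ℂ (p.eval (-(starRingEnd ℂ z))) := by
  simp [pdag, eval_comp, eval_map, ← Polynomial.eval₂_at_apply]

lemma pdag_eval_I (p : ℂ[X]) (x : ℝ) :
    (pdag p).eval (Complex.I * x) = starRingEnd ℂ (p.eval (Complex.I * x)) := by
  rw [pdag_eval]; congr 1; simp [Complex.ext_iff]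

lemma pdag_pdag (p : ℂ[X]) : pdag (pdag p) = p := by
  simp only [pdag, map_comp, Polynomial.map_map, Polynomial.map_neg, map_X]
  rw [comp_assoc]
  simp [RingHom.comp_id, Polynomial.map_id]

lemma natDegree_pdag (p : ℂ[X]) : (pdag p).natDegree = p.natDegree := by
  rw [pdag, natDegree_comp]
  simp [natDegree_map_eq_iff]

lemma pdag_ne_zero {p : ℂ[X]} (hp : p ≠ 0) : pdag p ≠ 0 := by
  intro h
  apply hp
  have := congrArg pdag h
  rwa [pdag_pdag, show pdag 0 = 0 by simp [pdag]] at this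

lemma cross_mul {r : RatFunc ℂ} {p : ℂ[X]} (hp : p ≠ 0)
    (hrp : r = RatFunc.mk (pdag p) p) :
    r.num * p = r.denom * pdag p := by
  have h1 : r = algebraMap ℂ[X] (RatFunc ℂ) (pdag p) / algebraMap _ _ p := by
    rw [hrp, RatFunc.mk_eq_div]
  have h2 := RatFunc.num_div_denom r
  have hpa : algebraMap ℂ[X] (RatFunc ℂ) p ≠ 0 := RatFunc.algebraMap_ne_zero hp
  have hda : algebraMap ℂ[X] (RatFunc ℂ) r.denom ≠ 0 :=
    RatFunc.algebraMap_ne_zero (RatFunc.denom_ne_zero r)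
  have := h2.trans h1
  rw [div_eq_div_iff hda hpa] at this
  have : algebraMap ℂ[X] (RatFunc ℂ) (r.num * p) =
      algebraMap ℂ[X] (RatFunc ℂ) (r.denom * pdag p) := by
    rw [map_mul, map_mul]; linear_combination this
  exact RatFunc.algebraMap_injective ℂ this

lemma denom_dvd' {r : RatFunc ℂ} {p : ℂ[X]} (hp : p ≠ 0)
    (hrp : r = RatFunc.mk (pdag p) p) : r.denom ∣ p := by
  rw [RatFunc.denom_dvd hp]
  exact ⟨pdag p, by rw [hrp, RatFunc.mk_eq_div]⟩

lemma num_dvd' {r : RatFunc ℂ} {p : ℂ[X]} (hp : p ≠ 0)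
    (hrp : r = RatFunc.mk (pdag p) p) : r.num ∣ pdag p := by
  have h := cross_mul hp hrp
  have : r.num ∣ r.denom * pdag p := ⟨p, by linear_combination -h⟩
  exact (RatFunc.isCoprime_num_denom r).dvd_of_dvd_mul_left this

lemma denom_eval_ne {r : RatFunc ℂ} {p : ℂ[X]} (hp : p ≠ 0)
    (hrp : r = RatFunc.mk (pdag p) p) (x : ℝ) :
    r.denom.eval (Complex.I * x) ≠ 0 := by
  intro h0
  set z : ℂ := Complex.I * x with hz
  have hcross := cross_mul hp hrp
  have hdvd := denom_dvd' hp hrp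
  have hne : r.denom ≠ 0 := RatFunc.denom_ne_zero r
  have hnum : r.num ≠ 0 := by
    intro h
    rw [RatFunc.num_eq_zero_iff] at h
    rw [h] at hrp
    have : pdag p = 0 := by
      by_contra hne'
      have := RatFunc.mk_eq_div (pdag p) p ▸ hrp
      exact (div_ne_zero (RatFunc.algebraMap_ne_zero hne')
        (RatFunc.algebraMap_ne_zero hp)) this.symm
    exact pdag_ne_zero hp this
  have hmult : ∀ q : ℂ[X], q ≠ 0 → (pdag q).rootMultiplicity z = q.rootMultiplicity z := by
    intro q hq
    set k := q.rootMultiplicity z with hk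
    have hqeq := Polynomial.pow_mul_divByMonic_rootMultiplicity_eq q z
    set t := q /ₘ (X - C z) ^ k with ht
    have htz : t.eval z ≠ 0 := Polynomial.eval_divByMonic_pow_rootMultiplicity_ne_zero z hq
    have hXz : pdag (X - C z) = -(X - C z) := by
      have : starRingEnd ℂ z = -z := by
        simp only [hz, map_mul, Complex.conj_I]
        ring_nf
        simp
      simp [pdag, Polynomial.map_sub, this]
      ring
    have hpow : pdag ((X - C z) ^ k) = (-1)^k * (X - C z)^k := by
      induction k with
      | zero => simp [pdag]
      | succ m ih => rw [pow_succ, pdag_mul, ih, hXz]; ring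
    have : pdag q = (X - C z)^k * ((-1)^k * pdag t) := by
      rw [← hqeq, pdag_mul, hpow]; ring
    rw [this, Polynomial.rootMultiplicity_mul, Polynomial.rootMultiplicity_X_sub_C_pow]
    · have h1 : ((-1:ℂ[X])^k * pdag t).eval z ≠ 0 := by
        simp only [eval_mul, eval_pow, eval_neg, eval_one, pdag_eval]
        refine mul_ne_zero (by simp) ?_
        have : -(starRingEnd ℂ z) = z := by
          simp only [hz, map_mul, Complex.conj_I]
          ring_nf
          simp
        rw [this]
        simpa using htz
      rw [Polynomial.rootMultiplicity_eq_zero (by simpa [Polynomial.IsRoot] using h1)]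
      omega
    · rw [← this]
      exact pdag_ne_zero hq
  have hmultp : (pdag p).rootMultiplicity z = p.rootMultiplicity z := hmult p hp
  have e1 : (r.num * p).rootMultiplicity z = (r.denom * pdag p).rootMultiplicity z := by
    rw [hcross]
  rw [Polynomial.rootMultiplicity_mul (mul_ne_zero hnum hp),
    Polynomial.rootMultiplicity_mul (mul_ne_zero hne (pdag_ne_zero hp)), hmultp] at e1
  have hd1 : 1 ≤ r.denom.rootMultiplicity z :=
    (Polynomial.le_rootMultiplicity_iff hne).mpr (by simpa using Polynomial.dvd_iff_isRoot.mpr h0)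
  have hn1 : 1 ≤ r.num.rootMultiplicity z := by omega
  have hnroot : r.num.eval z = 0 :=
    (Polynomial.rootMultiplicity_pos hnum (x := z)).mp (by omega)
  obtain ⟨a, b, hab⟩ := RatFunc.isCoprime_num_denom r
  have := congrArg (Polynomial.eval z) hab
  simp [hnroot, h0] at this

lemma ieval_eq (r : RatFunc ℂ) (x : ℝ) :
    ieval r x = r.num.eval (Complex.I * x) / r.denom.eval (Complex.I * x) := by
  rfl

lemma num_pdag_eq {r : RatFunc ℂ} {p : ℂ[X]} (hp : p ≠ 0)
    (hrp : r = RatFunc.mk (pdag p) p) :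
    r.num * pdag r.num = r.denom * pdag r.denom := by
  have h := cross_mul hp hrp
  have h2 := congrArg pdag h
  rw [pdag_mul, pdag_mul, pdag_pdag] at h2
  have : (r.num * pdag r.num) * (p * pdag p) = (r.denom * pdag r.denom) * (p * pdag p) := by
    calc (r.num * pdag r.num) * (p * pdag p)
        = (r.num * p) * (pdag r.num * pdag p) := by ring
      _ = (r.denom * pdag p) * (pdag r.denom * p) := by rw [h, h2]
      _ = (r.denom * pdag r.denom) * (p * pdag p) := by ring
  exact mul_right_cancel₀ (mul_ne_zero hp (pdag_ne_zero hp)) this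

lemma abs_ieval_eq_one {r : RatFunc ℂ} {p : ℂ[X]} (hp : p ≠ 0)
    (hrp : r = RatFunc.mk (pdag p) p) (x : ℝ) :
    ‖ieval r x‖ = 1 := by
  have hd := denom_eval_ne hp hrp x
  have h := congrArg (Polynomial.eval (Complex.I * x)) (num_pdag_eq hp hrp)
  rw [eval_mul, eval_mul, pdag_eval_I, pdag_eval_I] at h
  rw [Complex.mul_conj, Complex.mul_conj] at h
  have habs : ‖r.num.eval (Complex.I * x)‖
      = ‖r.denom.eval (Complex.I * x)‖ := by
    have := congrArg Complex.re h
    simp only [Complex.ofReal_re, ← Complex.sq_norm] at this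
    have h1 : (0:ℝ) ≤ ‖r.num.eval (Complex.I * x)‖ := norm_nonneg _
    have h2 : (0:ℝ) ≤ ‖r.denom.eval (Complex.I * x)‖ := norm_nonneg _
    nlinarith
  rw [ieval_eq, norm_div, habs, div_self]
  simpa using hd

lemma continuous_ieval {r : RatFunc ℂ} {p : ℂ[X]} (hp : p ≠ 0)
    (hrp : r = RatFunc.mk (pdag p) p) : Continuous (ieval r) := by
  have h1 : Continuous fun x : ℝ => r.num.eval (Complex.I * x) :=
    (Polynomial.continuous _).comp (by continuity)
  have h2 : Continuous fun x : ℝ => r.denom.eval (Complex.I * x) :=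
    (Polynomial.continuous _).comp (by continuity)
  exact h1.div h2 fun x => denom_eval_ne hp hrp x

lemma abs_exp_sub_exp (a b : ℝ) :
    ‖Complex.exp (Complex.I * a) - Complex.exp (Complex.I * b)‖
      = 2 * |Real.sin ((a - b) / 2)| := by
  have ha : Complex.exp (Complex.I * a)
      = Complex.ofReal (Real.cos a) + Complex.ofReal (Real.sin a) * Complex.I := by
    rw [mul_comm, Complex.exp_mul_I]
    simp [Complex.ofReal_cos, Complex.ofReal_sin]
  have hb : Complex.exp (Complex.I * b)
      = Complex.ofReal (Real.cos b) + Complex.ofReal (Real.sin b) * Complex.I := by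
    rw [mul_comm, Complex.exp_mul_I]
    simp [Complex.ofReal_cos, Complex.ofReal_sin]
  rw [ha, hb]
  have hcomb : (Complex.ofReal (Real.cos a) + Complex.ofReal (Real.sin a) * Complex.I) -
      (Complex.ofReal (Real.cos b) + Complex.ofReal (Real.sin b) * Complex.I)
      = Complex.ofReal (Real.cos a - Real.cos b)
        + Complex.ofReal (Real.sin a - Real.sin b) * Complex.I := by
    push_cast; ring
  rw [hcomb, Complex.norm_add_mul_I]
  rw [show (Real.cos a - Real.cos b)^2 + (Real.sin a - Real.sin b)^2
      = (2 * |Real.sin ((a-b)/2)|)^2 from by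
    have h1 := Real.cos_sub a b
    have h2 := Real.sin_sq_add_cos_sq a
    have h3 := Real.sin_sq_add_cos_sq b
    have h4 := Real.cos_two_mul ((a-b)/2)
    have h5 := Real.sin_sq_add_cos_sq ((a-b)/2)
    have h6 : |Real.sin ((a-b)/2)|^2 = Real.sin ((a-b)/2)^2 := sq_abs _
    have h7 : (2:ℝ) * ((a-b)/2) = a - b := by ring
    rw [h7] at h4
    nlinarith]
  exact Real.sqrt_sq (by positivity)

lemma le_sSup_image {h : ℝ → ℝ} (hc : ContinuousOn h (Set.Icc (-1:ℝ) 1)) {x : ℝ}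
    (hx : x ∈ Set.Icc (-1:ℝ) 1) : h x ≤ sSup (h '' Set.Icc (-1:ℝ) 1) :=
  le_csSup ((isCompact_Icc.image_of_continuousOn hc).bddAbove) ⟨x, hx, rfl⟩

lemma sSup_image_le {h : ℝ → ℝ} {c : ℝ} (hc : ∀ x ∈ Set.Icc (-1:ℝ) 1, h x ≤ c) :
    sSup (h '' Set.Icc (-1:ℝ) 1) ≤ c :=
  csSup_le (Set.Nonempty.image _ ⟨0, by norm_num⟩) (by rintro y ⟨x, hx, rfl⟩; exact hc x hx)

lemma abs_sin_eq {t : ℝ} (h : |t| ≤ Real.pi) : |Real.sin t| = Real.sin |t| := by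
  rcases le_or_gt 0 t with ht | ht
  · rw [abs_of_nonneg ht, abs_of_nonneg (Real.sin_nonneg_of_nonneg_of_le_pi ht
      (by rwa [abs_of_nonneg ht] at h))]
  · rw [abs_of_neg ht, Real.sin_neg]
    exact abs_of_nonpos (Real.sin_nonpos_of_nonpos_of_neg_pi_le ht.le (by
      rw [abs_of_neg ht] at h; linarith))

lemma abs_sin_half_le {t E : ℝ} (h : |t| ≤ E) (hEπ : E ≤ Real.pi) :
    |Real.sin (t/2)| ≤ Real.sin (E/2) := by
  have ht2 : |t/2| ≤ E/2 := by rw [abs_div, abs_of_nonneg (by norm_num : (0:ℝ) ≤ 2)]; linarith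
  have hπ2 : |t/2| ≤ Real.pi := by linarith [Real.pi_pos]
  rw [abs_sin_eq hπ2]
  have h0 : (0:ℝ) ≤ |t/2| := abs_nonneg _
  exact Real.strictMonoOn_sin.monotoneOn ⟨by linarith [Real.pi_pos], by linarith⟩
    ⟨by linarith [Real.pi_pos, abs_nonneg t], by linarith⟩ ht2

lemma sin_half_le_abs {φ E : ℝ} (h : E ≤ |φ|) (hφ : |φ| ≤ Real.pi) (hE0 : 0 ≤ E) :
    Real.sin (E/2) ≤ |Real.sin (φ/2)| := by
  have habs : |φ/2| = |φ|/2 := by rw [abs_div, abs_of_nonneg (by norm_num : (0:ℝ) ≤ 2)]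
  have ht2 : |φ/2| ≤ Real.pi := by rw [habs]; linarith [Real.pi_pos]
  rw [abs_sin_eq ht2, habs]
  exact Real.strictMonoOn_sin.monotoneOn ⟨by linarith [Real.pi_pos], by linarith⟩
    ⟨by linarith [Real.pi_pos], by linarith⟩ (by linarith)

lemma phaseErr_lt_pi
    (n : ℕ) (ω : ℝ) (hω : 0 < ω) (hω' : ω < ((n:ℝ)+1) * Real.pi)
    (m : ℕ) (θ : ℝ) (μ ξ : Fin m → ℝ) (hm : m ≤ n) (hξ : ∀ j, ξ j ≠ 0)
    (g : ℝ → ℝ) (hgθ : ∀ x, g x = θ + 2 * ∑ j, Real.arctan ((x - μ j)/ξ j))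
    (η : Fin (2*n+2) → ℝ) (ε : ℝ) (hmono : StrictMono η)
    (hmem : ∀ j, η j ∈ Set.Icc (-1:ℝ) 1)
    (hε : ε = 1 ∨ ε = -1)
    (halt : ∀ j : Fin (2*n+2), g (η j) - ω * η j = ε * (-1)^(j:ℕ) * phaseErrSup ω g) :
    phaseErrSup ω g < Real.pi := by
  have hπ := Real.pi_pos
  set E := phaseErrSup ω g with hE
  have hcg : Continuous g := by
    have : g = fun x => θ + 2 * ∑ j, Real.arctan ((x - μ j)/ξ j) := funext hgθ
    rw [this]
    refine continuous_const.add (continuous_const.mul ?_)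
    exact continuous_finset_sum _ fun j _ =>
      Real.continuous_arctan.comp (by continuity)
  have hcψ : Continuous fun x => |g x - ω * x| := by continuity
  have hE0 : 0 ≤ E := by
    have := le_sSup_image (hcψ.continuousOn) (hmem 0)
    exact le_trans (abs_nonneg _) this
  have hε1 : |ε| = 1 := by rcases hε with h | h <;> simp [h]
  have h2n : ∀ i : ℕ, min i (2*n+1) < 2*n+2 := fun i => by omega
  set e : ℕ → ℝ := fun i => η ⟨min i (2*n+1), h2n i⟩ with he
  have heeq : ∀ i, i ≤ 2*n+1 → ∀ (h : i < 2*n+2), e i = η ⟨i, h⟩ := by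
    intro i hi h
    simp only [he]
    congr 1
    exact Fin.mk_eq_mk.mpr (min_eq_left hi)
  have hemono : Monotone e := by
    intro i j hij
    exact hmono.monotone (Fin.mk_le_mk.mpr (min_le_min_right _ hij))
  have hψe : ∀ i, i ≤ 2*n+1 → g (e i) - ω * e i = ε * (-1)^i * E := by
    intro i hi
    rw [heeq i hi (by omega)]
    simpa using halt ⟨i, by omega⟩
  have key : ∀ i, i < 2*n+1 →
      2*E ≤ |g (e (i+1)) - g (e i)| + ω * (e (i+1) - e i) := by
    intro i hi
    have h1 := hψe i (by omega)
    have h2 := hψe (i+1) (by omega)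
    have hdiff : (g (e (i+1)) - g (e i)) - ω * (e (i+1) - e i) = -2 * ε * (-1)^i * E := by
      rw [pow_succ] at h2
      nlinarith [h1, h2]
    have habs : |(g (e (i+1)) - g (e i)) - ω * (e (i+1) - e i)| = 2*E := by
      rw [hdiff, abs_mul, abs_of_nonneg hE0, abs_mul, abs_mul, hε1, abs_pow]
      norm_num
    have hΔ : 0 ≤ e (i+1) - e i := by
      have := hemono (Nat.le_succ i); linarith
    calc 2*E = |(g (e (i+1)) - g (e i)) - ω * (e (i+1) - e i)| := habs.symm
      _ ≤ |g (e (i+1)) - g (e i)| + |ω * (e (i+1) - e i)| := abs_sub _ _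
      _ = |g (e (i+1)) - g (e i)| + ω * (e (i+1) - e i) := by
          rw [abs_of_nonneg (mul_nonneg hω.le hΔ)]
  have hsum : (2*n+1 : ℝ) * (2*E) ≤
      (∑ i ∈ Finset.range (2*n+1), |g (e (i+1)) - g (e i)|) + ω * (e (2*n+1) - e 0) := by
    have h1 : ∑ i ∈ Finset.range (2*n+1), (2*E) ≤
        ∑ i ∈ Finset.range (2*n+1), (|g (e (i+1)) - g (e i)| + ω * (e (i+1) - e i)) :=
      Finset.sum_le_sum fun i hi => key i (Finset.mem_range.mp hi)
    rw [Finset.sum_const, Finset.card_range, Finset.sum_add_distrib] at h1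
    have h2 : ∑ i ∈ Finset.range (2*n+1), ω * (e (i+1) - e i) = ω * (e (2*n+1) - e 0) := by
      calc ∑ i ∈ Finset.range (2*n+1), ω * (e (i+1) - e i)
          = ∑ i ∈ Finset.range (2*n+1), ((fun i => ω * e i) (i+1) - (fun i => ω * e i) i) :=
            Finset.sum_congr rfl fun i _ => by ring
        _ = ω * e (2*n+1) - ω * e 0 := Finset.sum_range_sub (fun i => ω * e i) (2*n+1)
        _ = ω * (e (2*n+1) - e 0) := by ring
    rw [h2] at h1
    calc (2*n+1 : ℝ) * (2*E) = (2*n+1 : ℕ) • (2*E) := by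
          rw [nsmul_eq_mul]; push_cast; ring
      _ ≤ _ := h1
  have hgvar : ∑ i ∈ Finset.range (2*n+1), |g (e (i+1)) - g (e i)| ≤ 2*(m:ℝ)*Real.pi := by
    have hterm : ∀ i ∈ Finset.range (2*n+1), |g (e (i+1)) - g (e i)| ≤
        2 * ∑ l, |Real.arctan ((e (i+1) - μ l)/ξ l) - Real.arctan ((e i - μ l)/ξ l)| := by
      intro i _
      rw [hgθ (e (i+1)), hgθ (e i)]
      have : θ + 2 * ∑ l, Real.arctan ((e (i+1) - μ l)/ξ l) -
          (θ + 2 * ∑ l, Real.arctan ((e i - μ l)/ξ l)) =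
          2 * ∑ l, (Real.arctan ((e (i+1) - μ l)/ξ l) - Real.arctan ((e i - μ l)/ξ l)) := by
        rw [Finset.sum_sub_distrib]; ring
      rw [this, abs_mul, abs_of_nonneg (by norm_num : (0:ℝ) ≤ 2)]
      exact mul_le_mul_of_nonneg_left (Finset.abs_sum_le_sum_abs _ _) (by norm_num)
    calc ∑ i ∈ Finset.range (2*n+1), |g (e (i+1)) - g (e i)|
        ≤ ∑ i ∈ Finset.range (2*n+1), 2 * ∑ l, |Real.arctan ((e (i+1) - μ l)/ξ l) -
            Real.arctan ((e i - μ l)/ξ l)| := Finset.sum_le_sum hterm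
      _ = 2 * ∑ l : Fin m, ∑ i ∈ Finset.range (2*n+1), |Real.arctan ((e (i+1) - μ l)/ξ l) -
            Real.arctan ((e i - μ l)/ξ l)| := by
          rw [← Finset.mul_sum, Finset.sum_comm]
      _ ≤ 2 * ∑ l : Fin m, Real.pi := by
          refine mul_le_mul_of_nonneg_left (Finset.sum_le_sum fun l _ => ?_) (by norm_num)
          set A : ℝ → ℝ := fun t => Real.arctan ((t - μ l)/ξ l) with hA
          have harc : ∀ t, -(Real.pi/2) < A t ∧ A t < Real.pi/2 := fun t =>
            ⟨Real.neg_pi_div_two_lt_arctan _, Real.arctan_lt_pi_div_two _⟩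
          rcases lt_or_gt_of_ne (hξ l) with hneg | hpos
          · have hmonoA : ∀ i j : ℕ, i ≤ j → A (e j) ≤ A (e i) := by
              intro i j hij
              apply Real.arctan_strictMono.monotone
              have hee := hemono hij
              have hkey : (e j - μ l)/ξ l - (e i - μ l)/ξ l = (e j - e i)/ξ l := by ring
              have : (e j - e i)/ξ l ≤ 0 :=
                div_nonpos_iff.mpr (Or.inl ⟨by linarith, hneg.le⟩)
              linarith [hkey ▸ this]
            have habs' : ∀ i ∈ Finset.range (2*n+1),
                |A (e (i+1)) - A (e i)| = A (e i) - A (e (i+1)) := by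
              intro i _
              rw [abs_sub_comm, abs_of_nonneg (by linarith [hmonoA i (i+1) (Nat.le_succ i)])]
            rw [Finset.sum_congr rfl habs', Finset.sum_range_sub' (fun i => A (e i))]
            have h0 := harc (e 0); have h1 := harc (e (2*n+1))
            linarith
          · have hmonoA : ∀ i j : ℕ, i ≤ j → A (e i) ≤ A (e j) := by
              intro i j hij
              apply Real.arctan_strictMono.monotone
              have hee := hemono hij
              have hkey : (e j - μ l)/ξ l - (e i - μ l)/ξ l = (e j - e i)/ξ l := by ring
              have : 0 ≤ (e j - e i)/ξ l := div_nonneg (by linarith) hpos.le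
              linarith [hkey ▸ this]
            have habs' : ∀ i ∈ Finset.range (2*n+1),
                |A (e (i+1)) - A (e i)| = A (e (i+1)) - A (e i) := by
              intro i _
              rw [abs_of_nonneg (by linarith [hmonoA i (i+1) (Nat.le_succ i)])]
            rw [Finset.sum_congr rfl habs', Finset.sum_range_sub (fun i => A (e i))]
            have h0 := harc (e 0); have h1 := harc (e (2*n+1))
            linarith
      _ = 2*(m:ℝ)*Real.pi := by
          rw [Finset.sum_const, Finset.card_univ, Fintype.card_fin, nsmul_eq_mul]
          ring
  have he0 := hmem ⟨min 0 (2*n+1), h2n 0⟩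
  have helast := hmem ⟨min (2*n+1) (2*n+1), h2n (2*n+1)⟩
  have hediff : e (2*n+1) - e 0 ≤ 2 := by
    have h1 : e (2*n+1) ≤ 1 := helast.2
    have h2 : (-1:ℝ) ≤ e 0 := he0.1
    linarith
  have hmn : (m:ℝ) ≤ (n:ℝ) := by exact_mod_cast hm
  have : (2*n+1 : ℝ) * (2*E) < 2*(n:ℝ)*Real.pi + 2*((n:ℝ)+1)*Real.pi := by
    have hω2 : ω * (e (2*n+1) - e 0) ≤ 2 * ω := by nlinarith
    nlinarith
  nlinarith

set_option maxHeartbeats 1600000 in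
/-- (Equioscillation implies optimality.) If `ω ∈ (0, (n+1)π)` and the phase
error of `r ∈ 𝒰_n` equioscillates between `2n+2` points in `[−1,1]`, then `r` minimizes
the approximation error over `𝒰_n` and `‖r − exp(ω·)‖ < 2`. -/
theorem equioscillation_implies_optimal (n : ℕ) (ω : ℝ)
    (hω : 0 < ω) (hω' : ω < ((n : ℝ) + 1) * Real.pi)
    (r : RatFunc ℂ) (hr : r ∈ unitaryClass n)
    (g : ℝ → ℝ) (hg : IsPhaseFun n r g)
    (hE : EquiOsc ω g (2 * n + 2)) :
    (∀ u ∈ unitaryClass n, errNorm ω r ≤ errNorm ω u) ∧ errNorm ω r < 2 := by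
  obtain ⟨p, hp, hpdeg, hrp⟩ := hr
  obtain ⟨m, θ, μ, ξ, hm, hξ, _hrep, hgθ, hgr⟩ := hg
  obtain ⟨η, ε, hmono, hmem, hε, halt⟩ := hE
  have hπ := Real.pi_pos
  set E := phaseErrSup ω g with hEdef
  have hEπ : E < Real.pi := phaseErr_lt_pi n ω hω hω' m θ μ ξ hm hξ g hgθ η ε hmono hmem hε halt
  have hcg : Continuous g := by
    have : g = fun x => θ + 2 * ∑ j, Real.arctan ((x - μ j)/ξ j) := funext hgθ
    rw [this]
    refine continuous_const.add (continuous_const.mul ?_)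
    exact continuous_finset_sum _ fun j _ => Real.continuous_arctan.comp ((continuous_id.sub continuous_const).div_const _)
  have hcψ : Continuous fun x => |g x - ω * x| := (hcg.sub (continuous_const.mul continuous_id)).abs
  have hψle : ∀ x ∈ Set.Icc (-1:ℝ) 1, |g x - ω*x| ≤ E :=
    fun x hx => le_sSup_image hcψ.continuousOn hx
  have hE0 : 0 ≤ E := le_trans (abs_nonneg _) (hψle _ (hmem 0))
  have hcast : ∀ x : ℝ, Complex.I * (ω:ℂ) * (x:ℂ) = Complex.I * ((ω*x : ℝ):ℂ) := by
    intro x; push_cast; ring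
  have herr_pt : ∀ x : ℝ, ‖ieval r x - Complex.exp (Complex.I * ω * x)‖
      = 2*|Real.sin ((g x - ω*x)/2)| := by
    intro x
    rw [hgr x, hcast x, abs_exp_sub_exp]
  have herr_le : errNorm ω r ≤ 2 * Real.sin (E/2) := by
    apply sSup_image_le
    intro x hx
    rw [herr_pt x]
    have := abs_sin_half_le (hψle x hx) hEπ.le
    linarith
  have hlt2 : errNorm ω r < 2 := by
    have h1 : Real.sin (E/2) < 1 := by
      have := Real.strictMonoOn_sin (Set.mem_Icc.mpr ⟨by linarith, by linarith⟩)
        (Set.mem_Icc.mpr ⟨by linarith, le_refl _⟩) (by linarith : E/2 < Real.pi/2)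
      rwa [Real.sin_pi_div_two] at this
    linarith
  refine ⟨?_, hlt2⟩
  intro u hu
  by_contra hcon
  push_neg at hcon
  obtain ⟨q, hq, hqdeg, hup⟩ := hu
  have hcu : Continuous (ieval u) := continuous_ieval hq hup
  have hcIωx : Continuous fun x : ℝ => Complex.I * (ω:ℂ) * (x:ℂ) :=
    continuous_const.mul Complex.continuous_ofReal
  have hcexp : Continuous fun x : ℝ => Complex.exp (Complex.I * ω * x) :=
    Complex.continuous_exp.comp hcIωx
  have hcerru : Continuous fun x : ℝ =>
      ‖ieval u x - Complex.exp (Complex.I * ω * x)‖ :=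
    (hcu.sub hcexp).norm
  have hupt : ∀ x ∈ Set.Icc (-1:ℝ) 1,
      ‖ieval u x - Complex.exp (Complex.I * ω * x)‖ ≤ errNorm ω u :=
    fun x hx => le_sSup_image hcerru.continuousOn hx
  have hu0 : 0 ≤ errNorm ω u :=
    le_trans (norm_nonneg _) (hupt 0 (by norm_num))
  -- the auxiliary function f and its argument φ
  set f : ℝ → ℂ := fun t => ieval u t * Complex.exp (-(Complex.I * ω * t)) with hfdef
  have hexpabs : ∀ t : ℝ, ‖Complex.exp (-(Complex.I * ω * t))‖ = 1 := by
    intro t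
    rw [Complex.norm_exp]
    norm_num [show (-(Complex.I * (ω:ℂ) * (t:ℂ))).re = 0 by simp]
  have hfabs : ∀ t, ‖f t‖ = 1 := by
    intro t
    rw [hfdef]
    simp only [norm_mul]
    rw [abs_ieval_eq_one hq hup t, hexpabs t]
    norm_num
  have hfsub : ∀ t, ‖f t - 1‖
      = ‖ieval u t - Complex.exp (Complex.I * ω * t)‖ := by
    intro t
    have h1 : f t - 1 = (ieval u t - Complex.exp (Complex.I * ω * t)) *
        Complex.exp (-(Complex.I * ω * t)) := by
      rw [hfdef]
      simp only [sub_mul, ← Complex.exp_add]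
      norm_num
    rw [h1, norm_mul, hexpabs t, mul_one]
  set φ : ℝ → ℝ := fun t => (f t).arg with hφdef
  have hfφ : ∀ t, f t = Complex.exp ((φ t : ℂ) * Complex.I) := by
    intro t
    have h := Complex.norm_mul_exp_arg_mul_I (f t)
    rw [hfabs t] at h
    simpa using h.symm
  have hφsin : ∀ t, ‖f t - 1‖ = 2*|Real.sin (φ t / 2)| := by
    intro t
    rw [hfφ t]
    have h1 : (φ t : ℂ) * Complex.I = Complex.I * ((φ t : ℝ):ℂ) := by ring
    have h0 : (1:ℂ) = Complex.exp (Complex.I * ((0:ℝ):ℂ)) := by simp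
    rw [h1, h0, abs_exp_sub_exp]
    norm_num
  have hφlt : ∀ t ∈ Set.Icc (-1:ℝ) 1, |φ t| < E := by
    intro t ht
    by_contra hcon2
    push_neg at hcon2
    have h1 : Real.sin (E/2) ≤ |Real.sin (φ t / 2)| :=
      sin_half_le_abs hcon2 (Complex.abs_arg_le_pi _) hE0
    have h2 : ‖f t - 1‖ ≤ errNorm ω u := (hfsub t) ▸ hupt t ht
    have h3 := hφsin t
    linarith
  have hfcont : Continuous f :=
    hcu.mul (Complex.continuous_exp.comp hcIωx.neg)
  have hslit : ∀ t ∈ Set.Icc (-1:ℝ) 1, f t ∈ Complex.slitPlane := by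
    intro t ht
    by_contra hsl
    rw [Complex.mem_slitPlane_iff] at hsl
    push_neg at hsl
    have hre : (f t).re ≤ 0 := hsl.1
    have him : (f t).im = 0 := hsl.2
    have hft : f t = ((f t).re : ℂ) := Complex.ext rfl (by simp [him])
    have habs := hfabs t
    rw [hft, Complex.norm_real, Real.norm_eq_abs, abs_of_nonpos hre] at habs
    have hfm1 : f t = -1 := by rw [hft]; rw [show (f t).re = -1 by linarith]; norm_num
    have h2 : ‖f t - 1‖ = 2 := by rw [hfm1]; norm_num
    have h3 : ‖f t - 1‖ ≤ errNorm ω u := (hfsub t) ▸ hupt t ht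
    linarith
  have hφcont : ContinuousOn φ (Set.Icc (-1:ℝ) 1) := fun t ht =>
    ((Complex.continuousAt_arg (hslit t ht)).comp hfcont.continuousAt).continuousWithinAt
  set D : ℝ → ℝ := fun t => (g t - ω*t) - φ t with hDdef
  have hDcont : ContinuousOn D (Set.Icc (-1:ℝ) 1) :=
    ((hcg.sub (continuous_const.mul continuous_id)).continuousOn).sub hφcont
  have hzero : ∀ j : ℕ, ∀ hj : j < 2*n+1,
      ∃ x, x ∈ Set.Ioo (η ⟨j, by omega⟩) (η ⟨j+1, by omega⟩) ∧ D x = 0 := by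
    intro j hj
    set a := η ⟨j, by omega⟩ with hadef
    set b := η ⟨j+1, by omega⟩ with hbdef
    have hab : a < b := hmono (Fin.mk_lt_mk.mpr (by omega))
    have haI : a ∈ Set.Icc (-1:ℝ) 1 := hmem _
    have hbI : b ∈ Set.Icc (-1:ℝ) 1 := hmem _
    have hsub : Set.Icc a b ⊆ Set.Icc (-1:ℝ) 1 := Set.Icc_subset_Icc haI.1 hbI.2
    have hDa : D a = ε * (-1)^j * E - φ a := by
      rw [hDdef]
      simp only
      rw [show g a - ω * a = ε * (-1)^j * E from by simpa using halt ⟨j, by omega⟩]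
    have hDb : D b = -(ε * (-1)^j) * E - φ b := by
      rw [hDdef]
      simp only
      rw [show g b - ω * b = ε * (-1)^(j+1) * E from by simpa using halt ⟨j+1, by omega⟩]
      rw [pow_succ]
      ring
    have hφa := hφlt a haI
    have hφb := hφlt b hbI
    have hc : ε * (-1:ℝ)^j = 1 ∨ ε * (-1:ℝ)^j = -1 := by
      rcases hε with h | h <;> rcases Nat.even_or_odd j with hj2 | hj2
      · left; rw [h, hj2.neg_one_pow]; ring
      · right; rw [h, hj2.neg_one_pow]; ring
      · right; rw [h, hj2.neg_one_pow]; ring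
      · left; rw [h, hj2.neg_one_pow]; ring
    rcases hc with hc | hc
    · have h1 : 0 < D a := by
        rw [hDa, hc]
        have := (abs_lt.mp hφa).2
        linarith
      have h2 : D b < 0 := by
        rw [hDb, hc]
        have := (abs_lt.mp hφb).1
        linarith
      obtain ⟨x, hx, hx0⟩ := intermediate_value_Ioo' hab.le (hDcont.mono hsub)
        (Set.mem_Ioo.mpr ⟨h2, h1⟩)
      exact ⟨x, hx, hx0⟩
    · have h1 : D a < 0 := by
        rw [hDa, hc]
        have := (abs_lt.mp hφa).1
        linarith
      have h2 : 0 < D b := by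
        rw [hDb, hc]
        have := (abs_lt.mp hφb).2
        linarith
      obtain ⟨x, hx, hx0⟩ := intermediate_value_Ioo hab.le (hDcont.mono hsub)
        (Set.mem_Ioo.mpr ⟨h1, h2⟩)
      exact ⟨x, hx, hx0⟩
  choose! xfun hxmem hxzero using hzero
  have hxlt : ∀ i j : ℕ, i < j → j < 2*n+1 → xfun i < xfun j := by
    intro i j hij hj
    have h1 := (hxmem i (by omega)).2
    have h2 := (hxmem j hj).1
    have h3 : η ⟨i+1, by omega⟩ ≤ η ⟨j, by omega⟩ :=
      hmono.monotone (Fin.mk_le_mk.mpr (by omega))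
    linarith
  have hinj : ∀ i j : ℕ, i < 2*n+1 → j < 2*n+1 → xfun i = xfun j → i = j := by
    intro i j hi hj hxy
    rcases lt_trichotomy i j with h | h | h
    · have := hxlt i j h hj; linarith
    · exact h
    · have := hxlt j i h hi; linarith
  have hvals : ∀ j : ℕ, j < 2*n+1 → ieval r (xfun j) = ieval u (xfun j) := by
    intro j hj
    have hx0 := hxzero j hj
    set t := xfun j with htdef
    have hgt : g t = φ t + ω*t := by
      have : (g t - ω*t) - φ t = 0 := hx0
      linarith
    have hueq : ieval u t = Complex.exp (Complex.I * ((φ t + ω*t : ℝ):ℂ)) := by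
      have h1 : ieval u t = f t * Complex.exp (Complex.I * ω * t) := by
        rw [hfdef]
        simp only [mul_assoc, ← Complex.exp_add]
        norm_num
      rw [h1, hfφ t, ← Complex.exp_add]
      congr 1
      push_cast
      ring
    rw [hueq, hgr t, hgt]
  set A := r.num * u.denom - u.num * r.denom with hAdef
  have hevalA : ∀ j : ℕ, j < 2*n+1 → A.eval (Complex.I * ((xfun j : ℝ):ℂ)) = 0 := by
    intro j hj
    have h := hvals j hj
    rw [ieval_eq r, ieval_eq u] at h
    have h1 := denom_eval_ne hp hrp (xfun j)
    have h2 := denom_eval_ne hq hup (xfun j)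
    rw [div_eq_div_iff h1 h2] at h
    rw [hAdef]
    simp only [Polynomial.eval_sub, Polynomial.eval_mul]
    linear_combination h
  have hdegnr : r.num.natDegree ≤ n :=
    (Polynomial.natDegree_le_of_dvd (num_dvd' hp hrp) (pdag_ne_zero hp)).trans
      (by rw [natDegree_pdag]; exact hpdeg)
  have hdegdr : r.denom.natDegree ≤ n :=
    (Polynomial.natDegree_le_of_dvd (denom_dvd' hp hrp) hp).trans hpdeg
  have hdegnu : u.num.natDegree ≤ n :=
    (Polynomial.natDegree_le_of_dvd (num_dvd' hq hup) (pdag_ne_zero hq)).trans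
      (by rw [natDegree_pdag]; exact hqdeg)
  have hdegdu : u.denom.natDegree ≤ n :=
    (Polynomial.natDegree_le_of_dvd (denom_dvd' hq hup) hq).trans hqdeg
  have hAdeg : A.natDegree ≤ 2*n := by
    refine le_trans (Polynomial.natDegree_sub_le _ _) (max_le ?_ ?_)
    · exact Polynomial.natDegree_mul_le.trans (by omega)
    · exact Polynomial.natDegree_mul_le.trans (by omega)
  have hA0 : A = 0 := by
    by_contra hA
    set T := Finset.image (fun j : Fin (2*n+1) => Complex.I * ((xfun (j:ℕ) : ℝ):ℂ))
      Finset.univ with hTdef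
    have hTcard : T.card = 2*n+1 := by
      rw [hTdef, Finset.card_image_of_injective _ ?_, Finset.card_univ, Fintype.card_fin]
      intro i j hij
      have h1 : ((xfun (i:ℕ) : ℝ):ℂ) = ((xfun (j:ℕ) : ℝ):ℂ) :=
        mul_left_cancel₀ Complex.I_ne_zero hij
      have h2 : xfun (i:ℕ) = xfun (j:ℕ) := by exact_mod_cast h1
      exact Fin.ext (hinj _ _ i.2 j.2 h2)
    have hsubT : T ⊆ A.roots.toFinset := by
      intro z hz
      rw [Multiset.mem_toFinset]
      obtain ⟨j, _, rfl⟩ := Finset.mem_image.mp hz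
      rw [Polynomial.mem_roots hA]
      exact hevalA (j:ℕ) j.2
    have hc1 := Finset.card_le_card hsubT
    have hc2 := Multiset.toFinset_card_le A.roots
    have hc3 := Polynomial.card_roots' A
    omega
  have hru : r = u := by
    have h := sub_eq_zero.mp hA0
    rw [← RatFunc.num_div_denom r, ← RatFunc.num_div_denom u,
      div_eq_div_iff (RatFunc.algebraMap_ne_zero (RatFunc.denom_ne_zero r))
        (RatFunc.algebraMap_ne_zero (RatFunc.denom_ne_zero u)),
      ← map_mul, ← map_mul, h]
  rw [hru] at hcon
  exact lt_irrefl _ hcon
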